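/- Let (X, ν) be a measure space, 1 ≤ p < ∞, and f : X → ℝ measurable. Then ‖f‖_{L^p(X,ν)} = sup_{λ>0} λ · ((ν × 𝓛^1)({(x,y) ∈ X × (0,∞) : |f(x)|/y^{1/p} > λ}))^{1/p}, i.e. the L^p norm of f on X equals the weak-L^p quasi-norm of the function (x,y) ↦ f(x)/y^{1/p} on X × (0,∞) with the product of ν and Lebesgue measure. -/

import Mathlib

open MeasureTheory Filter
open scoped ENNReal Topology

noncomputable section

theorem stmt18 {X : Type*} [MeasurableSpace X] (ν : Measure X) (p : ℝ) (hp : 1 ≤ p)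
    (f : X → ℝ) (hf : Measurable f) :
    (∫⁻ x, ENNReal.ofReal (|f x| ^ p) ∂ν) ^ (1 / p) =
      ⨆ (lam : ℝ) (_ : 0 < lam),
        ENNReal.ofReal lam *
          ((ν.prod (volume.restrict (Set.Ioi (0 : ℝ))))
              {q : X × ℝ | lam < |f q.1| / q.2 ^ (1 / p)}) ^ (1 / p) := by
  have hp0 : (0 : ℝ) < p := lt_of_lt_of_le one_pos hp
  have hp0' : p ≠ 0 := hp0.ne'
  have key : ∀ lam : ℝ, 0 < lam →
      ENNReal.ofReal lam *
          ((ν.prod (volume.restrict (Set.Ioi (0 : ℝ))))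
              {q : X × ℝ | lam < |f q.1| / q.2 ^ (1 / p)}) ^ (1 / p) =
      (∫⁻ x, ENNReal.ofReal (|f x| ^ p) ∂ν) ^ (1 / p) := by
    intro lam hlam
    have hmeas : MeasurableSet {q : X × ℝ | lam < |f q.1| / q.2 ^ (1 / p)} := by
      apply measurableSet_lt measurable_const
      exact ((hf.comp measurable_fst).abs).div (by measurability)
    rw [Measure.prod_apply hmeas]
    have hslice : ∀ x : X,
        (volume.restrict (Set.Ioi (0:ℝ)))
            (Prod.mk x ⁻¹' {q : X × ℝ | lam < |f q.1| / q.2 ^ (1 / p)}) =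
        ENNReal.ofReal (|f x| ^ p) * (ENNReal.ofReal (lam ^ p))⁻¹ := by
      intro x
      have hsm : MeasurableSet {y : ℝ | lam < |f x| / y ^ (1 / p)} := by
        apply measurableSet_lt measurable_const
        exact measurable_const.div (by measurability)
      have hpre : (Prod.mk x ⁻¹' {q : X × ℝ | lam < |f q.1| / q.2 ^ (1 / p)})
          = {y : ℝ | lam < |f x| / y ^ (1 / p)} := rfl
      rw [hpre, Measure.restrict_apply hsm]
      have hset : {y : ℝ | lam < |f x| / y ^ (1 / p)} ∩ Set.Ioi 0
          = Set.Ioo 0 ((|f x| / lam) ^ p) := by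
        ext y
        simp only [Set.mem_inter_iff, Set.mem_setOf_eq, Set.mem_Ioi, Set.mem_Ioo]
        constructor
        · rintro ⟨hlt, hy⟩
          refine ⟨hy, ?_⟩
          have hyp : 0 < y ^ (1 / p) := Real.rpow_pos_of_pos hy _
          have h1 : y ^ (1 / p) < |f x| / lam := by
            rw [lt_div_iff₀ hlam]
            calc y ^ (1 / p) * lam = lam * y ^ (1 / p) := mul_comm _ _
            _ < |f x| := (lt_div_iff₀ hyp).mp hlt
          have := Real.rpow_lt_rpow hyp.le h1 hp0
          rwa [← Real.rpow_mul hy.le, one_div,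
            inv_mul_cancel₀ hp0', Real.rpow_one] at this
        · rintro ⟨hy, hlt⟩
          refine ⟨?_, hy⟩
          have hbase : 0 < |f x| / lam := by
            by_contra h
            push_neg at h
            have : |f x| / lam = 0 := le_antisymm h (div_nonneg (abs_nonneg _) hlam.le)
            rw [this, Real.zero_rpow hp0'] at hlt
            exact absurd hlt (not_lt.mpr hy.le)
          have h1 : y ^ (1 / p) < |f x| / lam := by
            have := Real.rpow_lt_rpow hy.le hlt (by positivity : (0:ℝ) < 1 / p)
            rwa [← Real.rpow_mul hbase.le, mul_one_div, div_self hp0',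
              Real.rpow_one] at this
          have hyp : 0 < y ^ (1 / p) := Real.rpow_pos_of_pos hy _
          rw [lt_div_iff₀ hyp]
          calc lam * y ^ (1 / p) = y ^ (1 / p) * lam := mul_comm _ _
          _ < |f x| := (lt_div_iff₀ hlam).mp h1
      rw [hset, Real.volume_Ioo, sub_zero, Real.div_rpow (abs_nonneg _) hlam.le,
        ENNReal.ofReal_div_of_pos (by positivity : (0:ℝ) < lam ^ p), div_eq_mul_inv]
    simp_rw [hslice]
    rw [lintegral_mul_const' _ _ (by simpa using Real.rpow_pos_of_pos hlam p), ← div_eq_mul_inv,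
      ENNReal.div_rpow_of_nonneg _ _ (by positivity : (0:ℝ) ≤ 1 / p),
      ← ENNReal.ofReal_rpow_of_pos hlam, ← ENNReal.rpow_mul,
      mul_one_div, div_self hp0', ENNReal.rpow_one,
      ENNReal.mul_div_cancel (by simp [hlam] : ENNReal.ofReal lam ≠ 0)
        ENNReal.ofReal_ne_top]
  apply le_antisymm
  · have := key 1 one_pos
    calc (∫⁻ x, ENNReal.ofReal (|f x| ^ p) ∂ν) ^ (1 / p) = _ := this.symm
    _ ≤ _ := le_iSup₂ (f := fun (lam : ℝ) (_ : 0 < lam) =>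
        ENNReal.ofReal lam *
          ((ν.prod (volume.restrict (Set.Ioi (0 : ℝ))))
              {q : X × ℝ | lam < |f q.1| / q.2 ^ (1 / p)}) ^ (1 / p)) 1 one_pos
  · exact iSup₂_le fun lam hlam => (key lam hlam).le
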